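/- Let G be a strongly connected directed graph and G′ its undirected copy (each directed edge made undirected with the same weight). Then for every demand vector b: OPT_b(G′) ≤ OPT_b(G) ≤ (1 + bal(G))·OPT_b(G′). -/
import Mathlib


open Finset

variable {V : Type*} [Fintype V] [DecidableEq V]

/-- Total weight of edges from `S` to its complement. -/
def cutWeight (w : V → V → ℝ) (S : Finset V) : ℝ :=
  ∑ u ∈ S, ∑ v ∈ Sᶜ, w u v

/-- `G` is strongly connected. -/
def StronglyConnected (w : V → V → ℝ) : Prop :=
  ∀ u v : V, Relation.ReflTransGen (fun a b => 0 < w a b) u v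

/-- The demand vector `b` can be routed in the directed graph with congestion `c`. -/
def Routes (w : V → V → ℝ) (b : V → ℝ) (c : ℝ) : Prop :=
  ∃ f : V → V → ℝ, (∀ u v, 0 ≤ f u v) ∧ (∀ u v, f u v ≤ c * w u v) ∧
    ∀ x : V, (∑ u, f u x) - (∑ u, f x u) = b x

/-- `OPT_b(G)` for the directed graph `G`. -/
noncomputable def OPT (w : V → V → ℝ) (b : V → ℝ) : ℝ :=
  sInf {c : ℝ | 0 ≤ c ∧ Routes w b c}

/-- The demand `b` can be routed in the undirected copy `G'` (where each directed edge
is made undirected with the same weight) with congestion `c`: flow may traverse each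
edge in either direction. -/
def RoutesUndirCopy (w : V → V → ℝ) (b : V → ℝ) (c : ℝ) : Prop :=
  ∃ g : V → V → ℝ, (∀ u v, g u v = -g v u) ∧
    (∀ u v, |g u v| ≤ c * (w u v + w v u)) ∧
    ∀ x : V, (∑ u, g u x) = b x

/-- `OPT_b(G')` for the undirected copy `G'` of `G`. -/
noncomputable def OPTUndir (w : V → V → ℝ) (b : V → ℝ) : ℝ :=
  sInf {c : ℝ | 0 ≤ c ∧ RoutesUndirCopy w b c}

/-- The imbalance `bal(G)`. -/
noncomputable def bal (w : V → V → ℝ) : ℝ :=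
  sInf {α : ℝ | 0 ≤ α ∧ ∀ S : Finset V, cutWeight w S ≤ α * cutWeight w Sᶜ}

set_option linter.unusedSectionVars false

def ex (f : V → V → ℝ) (x : V) : ℝ := (∑ u, f u x) - (∑ u, f x u)

lemma sum_ex (f : V → V → ℝ) : ∑ x, ex f x = 0 := by
  simp only [ex, Finset.sum_sub_distrib]
  rw [Finset.sum_comm]
  ring

lemma sum_ex_cut (f : V → V → ℝ) (S : Finset V) :
    ∑ x ∈ S, ex f x = (∑ u ∈ Sᶜ, ∑ v ∈ S, f u v) - (∑ v ∈ S, ∑ u ∈ Sᶜ, f v u) := by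
  have h1 : ∀ x : V, (∑ u, f u x) = (∑ u ∈ S, f u x) + (∑ u ∈ Sᶜ, f u x) :=
    fun x => (Finset.sum_add_sum_compl S _).symm
  have h2 : ∀ x : V, (∑ u, f x u) = (∑ u ∈ S, f x u) + (∑ u ∈ Sᶜ, f x u) :=
    fun x => (Finset.sum_add_sum_compl S _).symm
  simp only [ex]
  rw [Finset.sum_sub_distrib]
  conv_lhs => rw [Finset.sum_congr rfl (fun x _ => h1 x), Finset.sum_congr rfl (fun x _ => h2 x)]
  rw [Finset.sum_add_distrib, Finset.sum_add_distrib]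
  have hc : ∑ x ∈ S, ∑ u ∈ S, f u x = ∑ x ∈ S, ∑ u ∈ S, f x u := Finset.sum_comm
  have hc2 : ∑ x ∈ S, ∑ u ∈ Sᶜ, f u x = ∑ u ∈ Sᶜ, ∑ v ∈ S, f u v := Finset.sum_comm
  linarith

lemma ex_single_update (f₁ : V → V → ℝ) (p q : V) (t : ℝ) (z : V) :
    ex (fun u v => f₁ u v + (if u = p ∧ v = q then t else 0)) z
      = ex f₁ z + t * ((if z = q then 1 else 0) - (if z = p then 1 else 0)) := by
  have h1 : ∑ u, (if u = p ∧ z = q then t else 0) = if z = q then t else 0 := by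
    by_cases h : z = q <;> simp [h, Finset.sum_ite_eq']
  have h2 : ∑ u, (if z = p ∧ u = q then t else 0) = if z = p then t else 0 := by
    by_cases h : z = p <;> simp [h, Finset.sum_ite_eq']
  simp only [ex, Finset.sum_add_distrib, h1, h2]
  split_ifs <;> ring


lemma augment (cap : V → V → ℝ) (f : V → V → ℝ)
    (hf0 : ∀ u v, 0 ≤ f u v) (hfc : ∀ u v, f u v ≤ cap u v)
    {x y : V} (hpath : Relation.ReflTransGen (fun u v => f u v < cap u v ∨ 0 < f v u) x y) :
    ∃ C : ℝ, 0 ≤ C ∧ ∃ ε₀ : ℝ, 0 < ε₀ ∧ ∀ ε : ℝ, 0 < ε → ε ≤ ε₀ →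
      ∃ f' : V → V → ℝ, (∀ u v, 0 ≤ f' u v) ∧ (∀ u v, f' u v ≤ cap u v) ∧
        (∀ u v, |f' u v - f u v| ≤ C * ε) ∧
        ∀ z, ex f' z = ex f z + ε * ((if z = y then 1 else 0) - (if z = x then 1 else 0)) := by
  induction hpath with
  | refl =>
    exact ⟨0, le_refl 0, 1, one_pos, fun ε hε hε1 =>
      ⟨f, hf0, hfc, fun u v => by simp, fun z => by simp⟩⟩
  | @tail b c hab hbc ih =>
    obtain ⟨C, hC, ε₀, hε₀, H⟩ := ih
    by_cases hbceq : b = c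
    · subst hbceq
      exact ⟨C, hC, ε₀, hε₀, H⟩
    rcases hbc with h1 | h2
    · -- forward residual edge: push ε on (b,c)
      refine ⟨C + 1, by linarith, min ε₀ ((cap b c - f b c) / (C + 1)), ?_, ?_⟩
      · exact lt_min hε₀ (div_pos (by linarith) (by linarith))
      intro ε hε hε1
      obtain ⟨f₁, h10, h1c, h1d, h1e⟩ := H ε hε (le_trans hε1 (min_le_left _ _))
      have hεδ : (C + 1) * ε ≤ cap b c - f b c := by
        have := le_trans hε1 (min_le_right _ _)
        rw [le_div_iff₀ (by linarith : (0:ℝ) < C + 1)] at this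
        linarith
      refine ⟨fun u v => f₁ u v + (if u = b ∧ v = c then ε else 0), ?_, ?_, ?_, ?_⟩
      · intro u v; dsimp only
        split_ifs with h
        · linarith [h10 u v]
        · simpa using h10 u v
      · intro u v; dsimp only
        split_ifs with h
        · obtain ⟨rfl, rfl⟩ := h
          have := (abs_le.mp (h1d u v)).2
          linarith
        · simpa using h1c u v
      · intro u v; dsimp only
        have h3 := abs_le.mp (h1d u v)
        split_ifs with h
        · rw [abs_le]; constructor <;> nlinarith
        · rw [add_zero, abs_le]; constructor <;> nlinarith
      · intro z
        rw [ex_single_update, h1e z]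
        split_ifs <;> ring
    · -- backward residual edge: remove ε from (c,b)
      refine ⟨C + 1, by linarith, min ε₀ (f c b / (C + 1)), ?_, ?_⟩
      · exact lt_min hε₀ (div_pos h2 (by linarith))
      intro ε hε hε1
      obtain ⟨f₁, h10, h1c, h1d, h1e⟩ := H ε hε (le_trans hε1 (min_le_left _ _))
      have hεδ : (C + 1) * ε ≤ f c b := by
        have := le_trans hε1 (min_le_right _ _)
        rw [le_div_iff₀ (by linarith : (0:ℝ) < C + 1)] at this
        linarith
      refine ⟨fun u v => f₁ u v + (if u = c ∧ v = b then -ε else 0), ?_, ?_, ?_, ?_⟩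
      · intro u v; dsimp only
        split_ifs with h
        · obtain ⟨rfl, rfl⟩ := h
          have := (abs_le.mp (h1d u v)).1
          linarith
        · simpa using h10 u v
      · intro u v; dsimp only
        split_ifs with h
        · linarith [h1c u v]
        · simpa using h1c u v
      · intro u v; dsimp only
        have h3 := abs_le.mp (h1d u v)
        split_ifs with h
        · rw [abs_le]; constructor <;> nlinarith
        · rw [add_zero, abs_le]; constructor <;> nlinarith
      · intro z
        rw [ex_single_update, h1e z]
        split_ifs <;> ring

lemma gale (cap : V → V → ℝ) (hcap : ∀ u v, 0 ≤ cap u v) (d : V → ℝ)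
    (hd : ∑ x, d x = 0)
    (hcut : ∀ S : Finset V, ∑ x ∈ S, d x ≤ ∑ u ∈ Sᶜ, ∑ v ∈ S, cap u v) :
    ∃ f : V → V → ℝ, (∀ u v, 0 ≤ f u v) ∧ (∀ u v, f u v ≤ cap u v) ∧
      ∀ x, ex f x = d x := by
  classical
  -- the compact feasible box
  set K : Set (V → V → ℝ) := Set.Icc 0 cap with hK
  have hKc : IsCompact K := isCompact_Icc
  have hKne : K.Nonempty := ⟨0, le_refl _, fun u => fun v => hcap u v⟩
  -- the objective
  set Φ : (V → V → ℝ) → ℝ := fun f => ∑ x, max (d x - ex f x) 0 with hΦ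
  have hcont : Continuous Φ := by
    apply continuous_finset_sum
    intro x _
    apply Continuous.max _ continuous_const
    apply Continuous.sub continuous_const
    apply Continuous.sub <;> apply continuous_finset_sum <;> intro u _
    · exact (continuous_apply x).comp (continuous_apply u)
    · exact (continuous_apply u).comp (continuous_apply x)
  obtain ⟨f₀, hf₀K, hmin⟩ := hKc.exists_isMinOn hKne hcont.continuousOn
  have hf₀0 : ∀ u v, 0 ≤ f₀ u v := fun u v => hf₀K.1 u v
  have hf₀c : ∀ u v, f₀ u v ≤ cap u v := fun u v => hf₀K.2 u v
  -- claim the optimum value is 0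
  have hΦ0 : Φ f₀ = 0 := by
    by_contra hne
    have hpos : 0 < Φ f₀ := lt_of_le_of_ne (Finset.sum_nonneg fun x _ => le_max_right _ _) (Ne.symm hne)
    -- there is a deficit vertex s
    obtain ⟨s, -, hs⟩ : ∃ s ∈ Finset.univ, 0 < max (d s - ex f₀ s) 0 := by
      by_contra hc
      push_neg at hc
      have : Φ f₀ ≤ 0 := Finset.sum_nonpos fun x hx => hc x hx
      linarith
    have hs' : 0 < d s - ex f₀ s := by
      by_contra hc
      push_neg at hc
      rw [max_eq_right hc] at hs
      exact lt_irrefl _ hs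
    set res : V → V → Prop := fun u v => f₀ u v < cap u v ∨ 0 < f₀ v u with hres
    by_cases hcase : ∃ t, Relation.ReflTransGen res t s ∧ d t - ex f₀ t < 0
    · -- augment along the path, contradict minimality
      obtain ⟨t, hpath, ht⟩ := hcase
      have hst : s ≠ t := fun h => by rw [h] at hs'; linarith
      obtain ⟨C, hC, ε₀, hε₀, H⟩ := augment cap f₀ hf₀0 hf₀c hpath
      set ε : ℝ := min ε₀ (min (d s - ex f₀ s) (ex f₀ t - d t)) with hε
      have hεpos : 0 < ε := lt_min hε₀ (lt_min hs' (by linarith))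
      obtain ⟨f', h'0, h'c, -, h'e⟩ := H ε hεpos (min_le_left _ _)
      have hεs : ε ≤ d s - ex f₀ s := le_trans (min_le_right _ _) (min_le_left _ _)
      have hεt : ε ≤ ex f₀ t - d t := le_trans (min_le_right _ _) (min_le_right _ _)
      have hf'K : f' ∈ K := ⟨fun u => fun v => h'0 u v, fun u => fun v => h'c u v⟩
      -- compute Φ f' = Φ f₀ - ε
      have key : Φ f' = Φ f₀ - ε := by
        have hdiff : ∀ x, max (d x - ex f' x) 0 - max (d x - ex f₀ x) 0
            = if x = s then -ε else 0 := by
          intro x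
          rw [h'e x]
          by_cases hxs : x = s
          · subst hxs
            rw [if_pos rfl, if_neg hst, if_pos rfl]
            rw [max_eq_left (by linarith), max_eq_left (by linarith)]
            ring
          · by_cases hxt : x = t
            · subst hxt
              rw [if_neg hxs, if_neg (Ne.symm hst), if_pos rfl]
              rw [max_eq_right (by linarith), max_eq_right (by linarith)]
              ring
            · rw [if_neg hxs, if_neg hxs, if_neg hxt]
              ring_nf
          
        have : ∑ x, (max (d x - ex f' x) 0 - max (d x - ex f₀ x) 0) = -ε := by
          rw [Finset.sum_congr rfl (fun x _ => hdiff x)]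
          simp [Finset.sum_ite_eq']
        rw [Finset.sum_sub_distrib] at this
        simp only [Φ]
        linarith
      have := hmin hf'K
      simp only [Set.mem_setOf_eq] at this
      rw [key] at this
      linarith
    · -- cut argument
      push_neg at hcase
      set S : Finset V := Finset.univ.filter (fun x => Relation.ReflTransGen res x s) with hS
      have hsS : s ∈ S := by
        simp only [hS, Finset.mem_filter, Finset.mem_univ, true_and]
        exact Relation.ReflTransGen.refl
      have hedge : ∀ u ∈ Sᶜ, ∀ v ∈ S, f₀ u v = cap u v ∧ f₀ v u = 0 := by
        intro u hu v hv
        simp only [hS, Finset.mem_compl, Finset.mem_filter, Finset.mem_univ, true_and] at hu hv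
        have hnres : ¬ res u v := fun h => hu (Relation.ReflTransGen.head h hv)
        simp only [res, not_or, not_lt] at hnres
        exact ⟨le_antisymm (hf₀c u v) hnres.1, le_antisymm hnres.2 (hf₀0 v u)⟩
      have hexcut : ∑ x ∈ S, ex f₀ x = ∑ u ∈ Sᶜ, ∑ v ∈ S, cap u v := by
        rw [sum_ex_cut]
        have e1 : ∑ u ∈ Sᶜ, ∑ v ∈ S, f₀ u v = ∑ u ∈ Sᶜ, ∑ v ∈ S, cap u v :=
          Finset.sum_congr rfl fun u hu => Finset.sum_congr rfl fun v hv => (hedge u hu v hv).1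
        have e2 : ∑ v ∈ S, ∑ u ∈ Sᶜ, f₀ v u = 0 :=
          Finset.sum_eq_zero fun v hv => Finset.sum_eq_zero fun u hu => (hedge u hu v hv).2
        rw [e1, e2, sub_zero]
      have hdle : ∀ x ∈ S, ex f₀ x ≤ d x := by
        intro x hx
        simp only [hS, Finset.mem_filter, Finset.mem_univ, true_and] at hx
        linarith [hcase x hx]
      have hstrict : ∑ x ∈ S, ex f₀ x < ∑ x ∈ S, d x := by
        apply Finset.sum_lt_sum hdle
        exact ⟨s, hsS, by linarith⟩
      have := hcut S
      linarith [hexcut ▸ hstrict]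
  -- conclude
  refine ⟨f₀, hf₀0, hf₀c, ?_⟩
  have hle : ∀ x, d x - ex f₀ x ≤ 0 := by
    intro x
    by_contra hc
    push_neg at hc
    have h1 : 0 < max (d x - ex f₀ x) 0 := lt_max_of_lt_left hc
    have h2 : 0 < Φ f₀ := Finset.sum_pos' (fun y _ => le_max_right _ _) ⟨x, Finset.mem_univ x, h1⟩
    linarith [hΦ0 ▸ h2]
  have hsum : ∑ x, (ex f₀ x - d x) = 0 := by
    rw [Finset.sum_sub_distrib, sum_ex, hd]; ring
  have hall := (Finset.sum_eq_zero_iff_of_nonneg (fun x _ => by linarith [hle x])).mp hsum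
  intro x
  have := hall x (Finset.mem_univ x)
  linarith

lemma cross_edge {w : V → V → ℝ} {S : Finset V} {a b : V}
    (hpath : Relation.ReflTransGen (fun a b => 0 < w a b) a b)
    (ha : a ∉ S) : b ∈ S → ∃ u, u ∉ S ∧ ∃ v ∈ S, 0 < w u v := by
  induction hpath with
  | refl => exact fun hb => absurd hb ha
  | @tail p q hap hpq ih =>
    intro hb
    by_cases hp : p ∈ S
    · exact ih hp
    · exact ⟨p, hp, q, hb, hpq⟩

lemma decomp_real (a A B : ℝ) (hA : 0 ≤ A) (hB : 0 ≤ B) :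
    a = min (max a 0) A + max (a - A) 0 - min (max (-a) 0) B - max (-a - B) 0 := by
  rcases le_total a 0 with h | h <;> rcases le_total a A with h2 | h2 <;>
    rcases le_total (-a) B with h3 | h3 <;>
    simp [max_def, min_def] <;> split_ifs <;> linarith

lemma cut_pos (w : V → V → ℝ) (hw : ∀ u v, 0 ≤ w u v) (hsc : StronglyConnected w)
    (S : Finset V) (hne : S.Nonempty) (hproper : S ≠ Finset.univ) :
    0 < ∑ u ∈ Sᶜ, ∑ v ∈ S, w u v := by
  obtain ⟨y, hy⟩ := hne
  obtain ⟨x, hx⟩ : ∃ x, x ∉ S := by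
    by_contra hc
    push_neg at hc
    exact hproper (Finset.eq_univ_iff_forall.mpr hc)
  obtain ⟨u, hu, v, hv, huv⟩ := cross_edge (hsc x y) hx hy
  have h1 : w u v ≤ ∑ v' ∈ S, w u v' :=
    Finset.single_le_sum (fun i _ => hw u i) hv
  have h2 : ∑ v' ∈ S, w u v' ≤ ∑ u' ∈ Sᶜ, ∑ v' ∈ S, w u' v' :=
    Finset.single_le_sum (fun i _ => Finset.sum_nonneg fun j _ => hw i j)
      (Finset.mem_compl.mpr hu)
  linarith


/-- Let `G` be a strongly connected directed graph and `G'` its undirected copy.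
Then for every demand vector `b`:
`OPT_b(G′) ≤ OPT_b(G) ≤ (1 + bal(G)) · OPT_b(G′)`. -/
theorem stmt7 (w : V → V → ℝ) (hw : ∀ u v, 0 ≤ w u v) (hsc : StronglyConnected w)
    (b : V → ℝ) (hb : (∑ v, b v) = 0) :
    OPTUndir w b ≤ OPT w b ∧ OPT w b ≤ (1 + bal w) * OPTUndir w b := by
  classical
  set D : Set ℝ := {c : ℝ | 0 ≤ c ∧ Routes w b c} with hD
  set U : Set ℝ := {c : ℝ | 0 ≤ c ∧ RoutesUndirCopy w b c} with hU
  set B : Set ℝ := {α : ℝ | 0 ≤ α ∧ ∀ S : Finset V, cutWeight w S ≤ α * cutWeight w Sᶜ} with hBs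
  have hOPT : OPT w b = sInf D := rfl
  have hOPTU : OPTUndir w b = sInf U := rfl
  have hbal : bal w = sInf B := rfl
  have hbddD : BddBelow D := ⟨0, fun c hc => hc.1⟩
  have hbddU : BddBelow U := ⟨0, fun c hc => hc.1⟩
  have hbddB : BddBelow B := ⟨0, fun c hc => hc.1⟩
  -- D is nonempty
  set c₀ : ℝ := ∑ S : Finset V, max 0 ((∑ x ∈ S, b x) / (∑ u ∈ Sᶜ, ∑ v ∈ S, w u v)) with hc₀
  have hc₀0 : 0 ≤ c₀ := Finset.sum_nonneg fun S _ => le_max_left 0 _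
  have hc₀S : ∀ S : Finset V, (∑ x ∈ S, b x) ≤ c₀ * (∑ u ∈ Sᶜ, ∑ v ∈ S, w u v) := by
    intro S
    have hterm : max 0 ((∑ x ∈ S, b x) / (∑ u ∈ Sᶜ, ∑ v ∈ S, w u v)) ≤ c₀ :=
      Finset.single_le_sum
        (f := fun T : Finset V => max (0:ℝ) ((∑ x ∈ T, b x) / (∑ u ∈ Tᶜ, ∑ v ∈ T, w u v)))
        (fun T _ => le_max_left 0 _) (Finset.mem_univ S)
    have hWnn : 0 ≤ ∑ u ∈ Sᶜ, ∑ v ∈ S, w u v :=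
      Finset.sum_nonneg fun i _ => Finset.sum_nonneg fun j _ => hw i j
    by_cases hSne : S.Nonempty
    · by_cases hSu : S = Finset.univ
      · subst hSu
        rw [hb]
        exact mul_nonneg hc₀0 hWnn
      · have hW := cut_pos w hw hsc S hSne hSu
        have h1 : (∑ x ∈ S, b x) / (∑ u ∈ Sᶜ, ∑ v ∈ S, w u v) ≤ c₀ :=
          le_trans (le_max_right _ _) hterm
        rw [div_le_iff₀ hW] at h1
        linarith [mul_comm c₀ (∑ u ∈ Sᶜ, ∑ v ∈ S, w u v)]
    · rw [Finset.not_nonempty_iff_eq_empty] at hSne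
      subst hSne
      simp only [Finset.sum_empty]
      exact mul_nonneg hc₀0 hWnn
  have hc₀D : c₀ ∈ D := by
    refine ⟨hc₀0, ?_⟩
    have hcut0 : ∀ S : Finset V, ∑ x ∈ S, b x ≤ ∑ u ∈ Sᶜ, ∑ v ∈ S, c₀ * w u v := by
      intro S
      have he : ∑ u ∈ Sᶜ, ∑ v ∈ S, c₀ * w u v = c₀ * ∑ u ∈ Sᶜ, ∑ v ∈ S, w u v := by
        rw [Finset.mul_sum]
        exact Finset.sum_congr rfl fun u _ => (Finset.mul_sum _ _ _).symm
      rw [he]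
      exact hc₀S S
    obtain ⟨f, hf0, hfc, hfe⟩ := gale (fun u v => c₀ * w u v)
      (fun u v => mul_nonneg hc₀0 (hw u v)) b hb hcut0
    exact ⟨f, hf0, hfc, fun x => hfe x⟩
  have hDne : D.Nonempty := ⟨c₀, hc₀D⟩
  -- D ⊆ U
  have hsub : D ⊆ U := by
    rintro c ⟨hc0, f, hf0, hfc, hfe⟩
    refine ⟨hc0, fun u v => f u v - f v u, fun u v => by ring, fun u v => ?_, fun x => ?_⟩
    · dsimp only
      rw [abs_le]
      constructor
      · have h1 := hf0 u v
        have h2 := hfc v u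
        have h3 := mul_nonneg hc0 (hw u v)
        have h4 := mul_add c (w u v) (w v u)
        linarith
      · have h1 := hf0 v u
        have h2 := hfc u v
        have h3 := mul_nonneg hc0 (hw v u)
        have h4 := mul_add c (w u v) (w v u)
        linarith
    · dsimp only
      rw [Finset.sum_sub_distrib]
      exact hfe x
  have hUne : U.Nonempty := ⟨c₀, hsub hc₀D⟩
  have part1 : OPTUndir w b ≤ OPT w b := by
    rw [hOPT, hOPTU]
    exact csInf_le_csInf hbddU hDne hsub
  -- B is nonempty
  have hcwnn : ∀ S : Finset V, 0 ≤ cutWeight w S :=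
    fun S => Finset.sum_nonneg fun i _ => Finset.sum_nonneg fun j _ => hw i j
  have hcompl : ∀ S : Finset V, cutWeight w Sᶜ = ∑ u ∈ Sᶜ, ∑ v ∈ S, w u v := by
    intro S
    rw [cutWeight, compl_compl]
  set α₀ : ℝ := ∑ S : Finset V, max 0 (cutWeight w S / cutWeight w Sᶜ) with hα₀
  have hα₀0 : 0 ≤ α₀ := Finset.sum_nonneg fun S _ => le_max_left 0 _
  have hα₀B : α₀ ∈ B := by
    refine ⟨hα₀0, fun S => ?_⟩
    have hterm : max 0 (cutWeight w S / cutWeight w Sᶜ) ≤ α₀ :=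
      Finset.single_le_sum
        (f := fun T : Finset V => max (0:ℝ) (cutWeight w T / cutWeight w Tᶜ))
        (fun T _ => le_max_left 0 _) (Finset.mem_univ S)
    by_cases hSne : S.Nonempty
    · by_cases hSu : S = Finset.univ
      · subst hSu
        have : cutWeight w Finset.univ = 0 := by
          rw [cutWeight]
          simp
        rw [this]
        exact mul_nonneg hα₀0 (hcwnn _)
      · have hW : 0 < cutWeight w Sᶜ := by
          rw [hcompl]
          exact cut_pos w hw hsc S hSne hSu
        have h1 : cutWeight w S / cutWeight w Sᶜ ≤ α₀ := le_trans (le_max_right _ _) hterm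
        rw [div_le_iff₀ hW] at h1
        linarith [mul_comm α₀ (cutWeight w Sᶜ)]
    · rw [Finset.not_nonempty_iff_eq_empty] at hSne
      subst hSne
      have : cutWeight w (∅ : Finset V) = 0 := by simp [cutWeight]
      rw [this]
      exact mul_nonneg hα₀0 (hcwnn _)
  have hBne : B.Nonempty := ⟨α₀, hα₀B⟩
  -- key step: α ∈ B, c ∈ U implies (1+α)*c ∈ D
  have hkey : ∀ α ∈ B, ∀ c ∈ U, ((1 + α) * c) ∈ D := by
    rintro α ⟨hα0, hαcut⟩ c ⟨hc0, g, hga, hgb, hge⟩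
    set F : V → V → ℝ := fun u v => min (max (g u v) 0) (c * w u v) with hF
    set R : V → V → ℝ := fun u v => max (g v u - c * w v u) 0 with hR
    have hF0 : ∀ u v, 0 ≤ F u v := fun u v => le_min (le_max_right _ _) (mul_nonneg hc0 (hw u v))
    have hFc : ∀ u v, F u v ≤ c * w u v := fun u v => min_le_right _ _
    have hR0 : ∀ u v, 0 ≤ R u v := fun u v => le_max_right _ _
    have hRc : ∀ u v, R u v ≤ c * w u v := by
      intro u v
      apply max_le _ (mul_nonneg hc0 (hw u v))
      have h1 := (abs_le.mp (hgb v u)).2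
      have h2 := mul_add c (w v u) (w u v)
      linarith
    have hdecomp : ∀ u v, g u v = F u v + R v u - F v u - R u v := by
      intro u v
      have hanti := hga v u
      simp only [hF, hR]
      rw [show g v u = -(g u v) by linarith [hga u v]]
      exact decomp_real (g u v) (c * w u v) (c * w v u)
        (mul_nonneg hc0 (hw u v)) (mul_nonneg hc0 (hw v u))
    have hb' : ∀ x, b x = ex F x - ex R x := by
      intro x
      rw [← hge x]
      rw [Finset.sum_congr rfl (fun u _ => hdecomp u x)]
      simp only [ex]
      rw [Finset.sum_sub_distrib, Finset.sum_sub_distrib, Finset.sum_add_distrib]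
      ring
    have hcut1 : ∀ S : Finset V, ∑ x ∈ S, (- ex R x) ≤ ∑ u ∈ Sᶜ, ∑ v ∈ S, α * c * w u v := by
      intro S
      rw [Finset.sum_neg_distrib, sum_ex_cut]
      have h2 : ∑ v ∈ S, ∑ u ∈ Sᶜ, R v u ≤ ∑ v ∈ S, ∑ u ∈ Sᶜ, c * w v u :=
        Finset.sum_le_sum fun i _ => Finset.sum_le_sum fun j _ => hRc i j
      have h3 : 0 ≤ ∑ u ∈ Sᶜ, ∑ v ∈ S, R u v :=
        Finset.sum_nonneg fun i _ => Finset.sum_nonneg fun j _ => hR0 i j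
      have h4 := hαcut S
      have h5 : ∑ v ∈ S, ∑ u ∈ Sᶜ, c * w v u = c * cutWeight w S := by
        rw [cutWeight, Finset.mul_sum]
        exact Finset.sum_congr rfl fun u _ => (Finset.mul_sum _ _ _).symm
      have h6 : ∑ u ∈ Sᶜ, ∑ v ∈ S, α * c * w u v = α * c * cutWeight w Sᶜ := by
        rw [hcompl, Finset.mul_sum]
        exact Finset.sum_congr rfl fun u _ => (Finset.mul_sum _ _ _).symm
      have h7 := mul_le_mul_of_nonneg_left h4 hc0
      rw [h6]
      have h8 : c * (α * cutWeight w Sᶜ) = α * c * cutWeight w Sᶜ := by ring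
      linarith
    obtain ⟨h, hh0, hhc, hhe⟩ := gale (fun u v => α * c * w u v)
      (fun u v => mul_nonneg (mul_nonneg hα0 hc0) (hw u v)) (fun x => - ex R x)
      (by rw [Finset.sum_neg_distrib, sum_ex, neg_zero])
      hcut1
    refine ⟨mul_nonneg (by linarith) hc0, fun u v => F u v + h u v,
      fun u v => add_nonneg (hF0 u v) (hh0 u v), fun u v => ?_, fun x => ?_⟩
    · dsimp only
      have h1 := hFc u v
      have h2 := hhc u v
      have h3 : (1 + α) * c * w u v = c * w u v + α * c * w u v := by ring
      linarith
    · dsimp only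
      have e1 : (∑ u, (F u x + h u x)) - (∑ u, (F x u + h x u)) = ex F x + ex h x := by
        simp only [ex, Finset.sum_add_distrib]
        ring
      rw [e1, hhe x, hb' x]
      ring
  -- finish part 2
  have hU0 : 0 ≤ OPTUndir w b := by
    rw [hOPTU]
    exact le_csInf hUne fun c hc => hc.1
  have hmain : ∀ α ∈ B, OPT w b ≤ (1 + α) * OPTUndir w b := by
    intro α hα
    have h1α : (0:ℝ) < 1 + α := by linarith [hα.1]
    have hstep : ∀ c ∈ U, OPT w b / (1 + α) ≤ c := by
      intro c hc
      have h1 : OPT w b ≤ (1 + α) * c := by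
        rw [hOPT]
        exact csInf_le hbddD (hkey α hα c hc)
      rw [div_le_iff₀ h1α]
      linarith [mul_comm c (1 + α)]
    have h2 : OPT w b / (1 + α) ≤ OPTUndir w b := by
      rw [hOPTU]
      exact le_csInf hUne hstep
    rw [div_le_iff₀ h1α] at h2
    linarith [mul_comm (OPTUndir w b) (1 + α)]
  refine ⟨part1, ?_⟩
  rcases eq_or_lt_of_le hU0 with h0 | hpos
  · have := hmain α₀ hα₀B
    rw [← h0] at this ⊢
    simpa using this
  · have hb2 : OPT w b / OPTUndir w b - 1 ≤ bal w := by
      rw [hbal]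
      apply le_csInf hBne
      intro α hα
      have := hmain α hα
      have h1 : OPT w b / OPTUndir w b ≤ 1 + α := by
        rw [div_le_iff₀ hpos]
        linarith [mul_comm (1 + α) (OPTUndir w b)]
      linarith
    have h3 : OPT w b / OPTUndir w b ≤ 1 + bal w := by linarith
    rw [div_le_iff₀ hpos] at h3
    linarith [mul_comm (1 + bal w) (OPTUndir w b)]
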